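/- For all nonnegative integers n and r, the n×n Hankel determinant det_{0≤i,j≤n-1}(C_{i+j+r}) of shifted Catalan numbers equals the r×r determinant det_{0≤i,j≤r-1} binom(i+j+n, i-j+n) of binomial coefficients. -/

import Mathlib

/-- `binom a b` for integer `b`: the binomial coefficient, zero when `b < 0` or `b > a`. -/
def binom (a : ℕ) (b : ℤ) : ℕ := if 0 ≤ b then a.choose b.toNat else 0

namespace HCB
open Finset Matrix

def zb (a : ℕ) (b : ℤ) : ℤ := (binom a b : ℤ)

lemma zb_neg {a : ℕ} {b : ℤ} (h : b < 0) : zb a b = 0 := by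
  simp [zb, binom, not_le.mpr h]

lemma zb_coe (a k : ℕ) : zb a (k : ℤ) = (a.choose k : ℤ) := by
  simp [zb, binom]

lemma zb_of_gt {a : ℕ} {b : ℤ} (h : (a : ℤ) < b) : zb a b = 0 := by
  rcases le_or_gt 0 b with hb | hb
  · obtain ⟨k, rfl⟩ : ∃ k : ℕ, b = (k : ℤ) := ⟨b.toNat, by omega⟩
    rw [zb_coe]
    norm_cast
    exact Nat.choose_eq_zero_of_lt (by exact_mod_cast h)
  · exact zb_neg hb

lemma zb_pascal (a : ℕ) (b : ℤ) : zb (a + 1) b = zb a b + zb a (b - 1) := by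
  rcases lt_trichotomy b 0 with hb | hb | hb
  · rw [zb_neg hb, zb_neg hb, zb_neg (by omega)]; ring
  · subst hb
    rw [zb_neg (by norm_num : (0:ℤ) - 1 < 0)]
    simp [zb, binom]
  · obtain ⟨c, rfl⟩ : ∃ c : ℕ, b = (c : ℤ) + 1 := ⟨(b - 1).toNat, by omega⟩
    have h2 : ((c : ℤ) + 1 - 1) = ((c : ℕ) : ℤ) := by ring
    have h1 : ((c : ℤ) + 1) = ((c + 1 : ℕ) : ℤ) := by push_cast; ring
    rw [h2, h1, zb_coe, zb_coe, zb_coe, Nat.choose_succ_succ']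
    push_cast; ring

lemma zb_diag (a : ℕ) : zb a (a : ℤ) = 1 := by rw [zb_coe]; simp

def bb (t h : ℕ) : ℤ :=
  if (t + h) % 2 = 0 then zb t (((t + h) / 2 : ℕ) : ℤ) - zb t ((((t + h) / 2 : ℕ) : ℤ) + 1) else 0

lemma bb_even (t h q : ℕ) (hq : t + h = 2 * q) :
    bb t h = zb t (q : ℤ) - zb t ((q : ℤ) + 1) := by
  unfold bb
  rw [if_pos (by omega), show (t + h) / 2 = q by omega]

lemma bb_odd (t h : ℕ) (ho : (t + h) % 2 = 1) : bb t h = 0 := by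
  unfold bb; rw [if_neg (by omega)]

lemma bb_eq_zero_of_gt {t h : ℕ} (h1 : t < h) : bb t h = 0 := by
  rcases Nat.even_or_odd (t + h) with ⟨q, hq⟩ | ⟨q, hq⟩
  · rw [bb_even t h q (by omega)]
    rw [zb_of_gt (by omega), zb_of_gt (by omega)]; ring
  · exact bb_odd t h (by omega)

lemma bb_diag (t : ℕ) : bb t t = 1 := by
  rw [bb_even t t t (by omega), zb_diag, zb_of_gt (by omega)]; ring

lemma bb_zero_succ (h : ℕ) : bb 0 (h + 1) = 0 := bb_eq_zero_of_gt (by omega)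

lemma bb_zero_zero : bb 0 0 = 1 := bb_diag 0

lemma bb_rec (t h : ℕ) : bb (t + 1) (h + 1) = bb t h + bb t (h + 2) := by
  rcases Nat.even_or_odd (t + h) with ⟨q, hq⟩ | ⟨q, hq⟩
  · rw [bb_even (t+1) (h+1) (q+1) (by omega), bb_even t h q (by omega),
      bb_even t (h+2) (q+1) (by omega)]
    have p1 : zb (t+1) ((q:ℤ)+1) = zb t ((q:ℤ)+1) + zb t (q:ℤ) := by
      have h' := zb_pascal t ((q:ℤ)+1)
      rw [show ((q:ℤ)+1-1) = (q:ℤ) by ring] at h'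
      push_cast at h' ⊢
      exact h'
    have p2 : zb (t+1) ((q:ℤ)+2) = zb t ((q:ℤ)+2) + zb t ((q:ℤ)+1) := by
      have h' := zb_pascal t ((q:ℤ)+2)
      rw [show ((q:ℤ)+2-1) = (q:ℤ)+1 by ring] at h'
      exact h'
    push_cast
    push_cast at p1 p2
    rw [show (q:ℤ)+1+1 = (q:ℤ)+2 by ring, p1, p2]
    ring
  · rw [bb_odd (t+1) (h+1) (by omega), bb_odd t h (by omega), bb_odd t (h+2) (by omega)]
    ring

lemma bb_rec0 (t : ℕ) : bb (t + 1) 0 = bb t 1 := by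
  rcases Nat.even_or_odd t with ⟨q, hq⟩ | ⟨q, hq⟩
  · rw [bb_odd (t+1) 0 (by omega), bb_odd t 1 (by omega)]
  · rw [bb_even (t+1) 0 (q+1) (by omega), bb_even t 1 (q+1) (by omega)]
    have p1 : zb (t+1) (((q+1:ℕ)):ℤ) = zb t (((q+1:ℕ)):ℤ) + zb t ((q:ℤ)) := by
      have h' := zb_pascal t (((q+1:ℕ)):ℤ)
      rw [show ((((q+1:ℕ)):ℤ)-1) = (q:ℤ) by push_cast; ring] at h'
      exact h'
    have p2 : zb (t+1) ((((q+1:ℕ)):ℤ)+1) = zb t ((((q+1:ℕ)):ℤ)+1) + zb t (((q+1:ℕ)):ℤ) := by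
      have h' := zb_pascal t ((((q+1:ℕ)):ℤ)+1)
      rw [show (((((q+1:ℕ)):ℤ)+1)-1) = (((q+1:ℕ)):ℤ) by ring] at h'
      exact h'
    rw [p1, p2]
    have hsym : zb t ((q:ℤ)) = zb t (((q+1:ℕ)):ℤ) := by
      rw [zb_coe, zb_coe]
      norm_cast
      rw [show t = 2*q+1 by omega]
      have := Nat.choose_symm (show q+1 ≤ 2*q+1 by omega)
      rw [show 2*q+1 - (q+1) = q by omega] at this
      omega
    rw [hsym]; ring


/-- entries of the inverse ballot matrix -/
def mm (k j : ℕ) : ℤ := (-1)^(k+j) * zb (k+j) ((k:ℤ) - j)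

lemma mm_def (k j : ℕ) : mm k j = (-1)^(k+j) * ((binom (k+j) ((k:ℤ) - j) : ℕ) : ℤ) := rfl

lemma mm_eq_zero_of_lt {k j : ℕ} (h : k < j) : mm k j = 0 := by
  unfold mm
  rw [zb_neg (by omega)]; ring

lemma mm_diag (k : ℕ) : mm k k = 1 := by
  unfold mm
  rw [show (k:ℤ) - k = ((0:ℕ):ℤ) by ring, zb_coe]
  rw [Nat.choose_zero_right]
  push_cast
  rw [mul_one]
  exact Even.neg_one_pow ⟨k, rfl⟩

lemma mm_zero_zero : mm 0 0 = 1 := mm_diag 0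

lemma mm_zero_succ (j : ℕ) : mm 0 (j+1) = 0 := mm_eq_zero_of_lt (by omega)

lemma mm_one_zero : mm 1 0 = -1 := by
  unfold mm
  rw [show ((1:ℕ):ℤ) - ((0:ℕ):ℤ) = ((1:ℕ):ℤ) by norm_num, zb_coe]
  norm_num

lemma mm_one_one : mm 1 1 = 1 := mm_diag 1

lemma mm_one_ssucc (j : ℕ) : mm 1 (j+2) = 0 := mm_eq_zero_of_lt (by omega)

lemma mm_base0 : mm 0 0 + mm 1 0 = 0 := by rw [mm_zero_zero, mm_one_zero]; ring

lemma mm_base_succ (j : ℕ) : mm 0 (j+1) + mm 1 (j+1) = mm 0 j := by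
  cases j with
  | zero => rw [mm_zero_succ, mm_one_one, mm_zero_zero]; ring
  | succ j' => rw [mm_zero_succ, mm_one_ssucc, mm_zero_succ]; ring

lemma mm_rec (k j : ℕ) :
    mm (k+2) (j+1) + 2 * mm (k+1) (j+1) + mm k (j+1) = mm (k+1) j := by
  unfold mm
  rw [show k+2+(j+1) = k+j+3 by ring, show k+1+(j+1) = k+j+2 by ring,
    show k+(j+1) = k+j+1 by ring, show k+1+j = k+j+1 by ring]
  have h1 := zb_pascal (k+j+2) ((k:ℤ)-j+1)
  rw [show k+j+2+1 = k+j+3 by ring] at h1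
  have h2 := zb_pascal (k+j+1) ((k:ℤ)-j+1)
  rw [show k+j+1+1 = k+j+2 by ring] at h2
  have h3 := zb_pascal (k+j+1) ((k:ℤ)-j)
  rw [show k+j+1+1 = k+j+2 by ring] at h3
  push_cast
  rw [show (k:ℤ)+2-((j:ℤ)+1) = (k:ℤ)-j+1 by ring, show (k:ℤ)+1-((j:ℤ)+1) = (k:ℤ)-j by ring,
    show (k:ℤ)-((j:ℤ)+1) = (k:ℤ)-j-1 by ring, show (k:ℤ)+1-(j:ℤ) = (k:ℤ)-j+1 by ring]
  rw [show ((k:ℤ)-j+1)-1 = (k:ℤ)-j by ring] at h1 h2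
  linear_combination (-(-1:ℤ)^(k+j)) * h1 + (-(-1:ℤ)^(k+j)) * h2 + ((-1:ℤ)^(k+j)) * h3

lemma mm_rec0 (k : ℕ) : mm (k+2) 0 + 2 * mm (k+1) 0 + mm k 0 = 0 := by
  unfold mm
  simp only [Nat.cast_zero, sub_zero, add_zero]
  rw [zb_diag, zb_diag, zb_diag]
  ring

/-- partial orthogonality sums -/
noncomputable def PP (i j : ℕ) : ℤ := ∑ k ∈ range (i+1), bb (2*i) (2*k) * mm k j

lemma bb4 (i k : ℕ) :
    bb (2*(i+1)) (2*(k+1)) = bb (2*i) (2*k) + 2 * bb (2*i) (2*(k+1)) + bb (2*i) (2*(k+2)) := by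
  rw [show 2*(i+1) = (2*i+1)+1 by ring, show 2*(k+1) = (2*k+1)+1 by ring]
  rw [bb_rec (2*i+1) (2*k+1)]
  rw [show 2*k+1 = (2*k)+1 from rfl, show (2*k+1)+2 = (2*k+2)+1 by ring]
  rw [bb_rec (2*i) (2*k), bb_rec (2*i) (2*k+2)]
  rw [show 2*k+2+2 = 2*(k+2) by ring, show 2*k+2 = 2*(k+1) by ring]
  ring

lemma bb0' (i : ℕ) : bb (2*(i+1)) 0 = bb (2*i) 0 + bb (2*i) 2 := by
  rw [show 2*(i+1) = (2*i+1)+1 by ring, bb_rec0 (2*i+1), show (1:ℕ) = 0+1 from rfl,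
    bb_rec (2*i) 0]

lemma PP_zero (j : ℕ) : PP 0 j = mm 0 j := by
  unfold PP
  simp [bb_zero_zero]

lemma claimA (i j : ℕ) :
    PP (i+1) j = ∑ t ∈ range (i+1), bb (2*i) (2*t) *
      (if t = 0 then mm 0 j + mm 1 j else mm (t+1) j + 2 * mm t j + mm (t-1) j) := by
  -- abbreviations
  set b0 := bb (2*i) 0 with hb0
  -- LHS expansion
  have F1 : PP (i+1) j
      = (∑ k ∈ range (i+1), bb (2*i) (2*k) * mm (k+1) j)
        + 2 * (∑ k ∈ range (i+1), bb (2*i) (2*(k+1)) * mm (k+1) j)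
        + (∑ k ∈ range (i+1), bb (2*i) (2*(k+2)) * mm (k+1) j)
        + (b0 + bb (2*i) 2) * mm 0 j := by
    unfold PP
    rw [Finset.sum_range_succ']
    have e1 : ∀ k ∈ range (i+1), bb (2*(i+1)) (2*(k+1)) * mm (k+1) j
        = bb (2*i) (2*k) * mm (k+1) j + 2 * (bb (2*i) (2*(k+1)) * mm (k+1) j)
          + bb (2*i) (2*(k+2)) * mm (k+1) j := by
      intro k _
      rw [bb4]; ring
    rw [Finset.sum_congr rfl e1]
    rw [Finset.sum_add_distrib, Finset.sum_add_distrib, ← Finset.mul_sum]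
    simp only [Nat.mul_zero]
    rw [bb0', hb0]
    try ring
  -- shift lemma for T1
  have F2 : (∑ k ∈ range (i+1), bb (2*i) (2*(k+1)) * mm (k+1) j)
      = (∑ k ∈ range (i+1), bb (2*i) (2*k) * mm k j) - b0 * mm 0 j := by
    have h := Finset.sum_range_succ' (fun k => bb (2*i) (2*k) * mm k j) (i+1)
    have h2 := Finset.sum_range_succ (fun k => bb (2*i) (2*k) * mm k j) (i+1)
    rw [h2] at h
    rw [bb_eq_zero_of_gt (by omega : 2*i < 2*(i+1))] at h
    simp only [zero_mul, add_zero] at h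
    rw [show 2*0 = 0 by ring] at h
    linarith [h]
  -- shift lemma for the (k+2) sum
  have F3 : (∑ k ∈ range (i+1), bb (2*i) (2*(k+2)) * mm (k+1) j)
      = (∑ k ∈ range (i+1), bb (2*i) (2*(k+1)) * mm k j) - bb (2*i) 2 * mm 0 j := by
    have h := Finset.sum_range_succ' (fun k => bb (2*i) (2*(k+1)) * mm k j) (i+1)
    have h2 := Finset.sum_range_succ (fun k => bb (2*i) (2*(k+1)) * mm k j) (i+1)
    rw [h2] at h
    rw [bb_eq_zero_of_gt (by omega : 2*i < 2*(i+1+1))] at h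
    simp only [zero_mul, add_zero] at h
    rw [show 2*(0+1) = 2 by ring] at h
    have : ∀ k ∈ range (i+1), bb (2*i) (2*(k+1+1)) * mm (k+1) j
        = bb (2*i) (2*(k+2)) * mm (k+1) j := by
      intro k _; rw [show k+1+1 = k+2 by ring]
    rw [Finset.sum_congr rfl this] at h
    linarith [h]
  -- T0 shift
  have F4 : (∑ k ∈ range (i+1), bb (2*i) (2*k) * mm (k+1) j)
      = b0 * mm 1 j + (∑ k ∈ range (i+1), bb (2*i) (2*(k+1)) * mm (k+2) j) := by
    have h := Finset.sum_range_succ' (fun k => bb (2*i) (2*k) * mm (k+1) j) i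
    have h2 := Finset.sum_range_succ (fun k => bb (2*i) (2*(k+1)) * mm (k+2) j) i
    rw [bb_eq_zero_of_gt (by omega : 2*i < 2*(i+1))] at h2
    simp only [zero_mul, add_zero] at h2
    simp only [Nat.mul_zero] at h
    have e4 : ∀ k ∈ range i, bb (2*i) (2*(k+1)) * mm (k+1+1) j
        = bb (2*i) (2*(k+1)) * mm (k+2) j := by
      intro k _; rw [show k+1+1 = k+2 by ring]
    rw [Finset.sum_congr rfl e4] at h
    rw [h, ← h2]
    ring
  -- RHS expansion
  have F5 : (∑ t ∈ range (i+1), bb (2*i) (2*t) *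
      (if t = 0 then mm 0 j + mm 1 j else mm (t+1) j + 2 * mm t j + mm (t-1) j))
      = (∑ t ∈ range (i+1), bb (2*i) (2*(t+1)) * (mm (t+2) j + 2 * mm (t+1) j + mm t j))
        + b0 * (mm 0 j + mm 1 j) := by
    have h := Finset.sum_range_succ' (fun t => bb (2*i) (2*t) *
      (if t = 0 then mm 0 j + mm 1 j else mm (t+1) j + 2 * mm t j + mm (t-1) j)) i
    have h2 := Finset.sum_range_succ (fun t => bb (2*i) (2*(t+1)) *
      (mm (t+2) j + 2 * mm (t+1) j + mm t j)) i
    rw [bb_eq_zero_of_gt (by omega : 2*i < 2*(i+1))] at h2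
    simp only [zero_mul, add_zero] at h2
    rw [h]
    simp only [Nat.mul_zero, if_pos rfl]
    have e5 : ∀ t ∈ range i, bb (2*i) (2*(t+1)) *
        (if t+1 = 0 then mm 0 j + mm 1 j else mm (t+1+1) j + 2 * mm (t+1) j + mm (t+1-1) j)
        = bb (2*i) (2*(t+1)) * (mm (t+2) j + 2 * mm (t+1) j + mm t j) := by
      intro t _
      rw [if_neg (by omega), show t+1+1 = t+2 by ring, show t+1-1 = t by omega]
    rw [Finset.sum_congr rfl e5, ← h2]
    simp only [if_true]
    try rw [← hb0]
    try ring
  rw [F1, F2, F3, F4, F5]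
  have expand : (∑ t ∈ range (i+1), bb (2*i) (2*(t+1)) * (mm (t+2) j + 2 * mm (t+1) j + mm t j))
      = (∑ t ∈ range (i+1), bb (2*i) (2*(t+1)) * mm (t+2) j)
        + 2 * (∑ t ∈ range (i+1), bb (2*i) (2*(t+1)) * mm (t+1) j)
        + (∑ t ∈ range (i+1), bb (2*i) (2*(t+1)) * mm t j) := by
    rw [Finset.mul_sum, ← Finset.sum_add_distrib, ← Finset.sum_add_distrib]
    exact Finset.sum_congr rfl (fun t _ => by ring)
  rw [expand, F2]
  ring

lemma PP_succ_succ (i j : ℕ) : PP (i+1) (j+1) = PP i j := by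
  rw [claimA]
  unfold PP
  apply Finset.sum_congr rfl
  intro t _
  congr 1
  cases t with
  | zero => rw [if_pos rfl, mm_base_succ]
  | succ s =>
    rw [if_neg (by omega), show s+1+1 = s+2 by ring, show s+1-1 = s by omega]
    exact mm_rec s j

lemma PP_succ_zero (i : ℕ) : PP (i+1) 0 = 0 := by
  rw [claimA]
  apply Finset.sum_eq_zero
  intro t _
  cases t with
  | zero => rw [if_pos rfl, mm_base0]; ring
  | succ s =>
    rw [if_neg (by omega), show s+1+1 = s+2 by ring, show s+1-1 = s by omega, mm_rec0]
    ring

lemma PP_eq (i j : ℕ) : PP i j = if i = j then 1 else 0 := by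
  induction i generalizing j with
  | zero =>
    rw [PP_zero]
    cases j with
    | zero => rw [mm_zero_zero, if_pos rfl]
    | succ j' => rw [mm_zero_succ, if_neg (by omega)]
  | succ i ih =>
    cases j with
    | zero => rw [PP_succ_zero, if_neg (by omega)]
    | succ j' =>
      rw [PP_succ_succ, ih j']
      by_cases h : i = j'
      · subst h; rw [if_pos rfl, if_pos rfl]
      · rw [if_neg h, if_neg (by omega)]

/-- Lem1 with arbitrary truncation -/
lemma lem1 (i j K : ℕ) (hi : i < K) :
    (∑ k ∈ range K, bb (2*i) (2*k) * mm k j) = if i = j then 1 else 0 := by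
  rw [← PP_eq i j]
  unfold PP
  symm
  apply Finset.sum_subset
  · exact Finset.range_subset_range.mpr (by omega)
  · intro k _ hk
    rw [Finset.mem_range, not_lt] at hk
    rw [bb_eq_zero_of_gt (by omega)]
    ring


/-- The central value: `bb (2*s) 0 = catalan s`. -/
lemma bb_catalan (s : ℕ) : bb (2*s) 0 = (catalan s : ℤ) := by
  rw [bb_even (2*s) 0 s (by omega)]
  rw [show (s:ℤ) + 1 = ((s+1:ℕ):ℤ) by push_cast; ring, zb_coe, zb_coe]
  have h1 : (s + 1) * catalan s = (2*s).choose s := by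
    have := succ_mul_catalan_eq_centralBinom s
    rwa [Nat.centralBinom] at this
  have h2 : (2*s).choose (s+1) * (s+1) = (2*s).choose s * s := by
    have := Nat.choose_succ_right_eq (2*s) s
    rwa [show 2*s - s = s by omega] at this
  have hs : ((s:ℤ) + 1) ≠ 0 := by positivity
  apply mul_left_cancel₀ hs
  push_cast
  push_cast at h1 h2
  nlinarith [h1, h2]

noncomputable def SS (H p q : ℕ) : ℤ := ∑ h ∈ range H, bb p h * bb q h

lemma SS_step (H p q : ℕ) (hp : p ≤ H) (hq : q + 1 ≤ H) :
    SS (H+1) (p+1) q = SS (H+1) p (q+1) := by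
  unfold SS
  rw [Finset.sum_range_succ' (fun h => bb (p+1) h * bb q h) H,
    Finset.sum_range_succ' (fun h => bb p h * bb (q+1) h) H]
  rw [bb_rec0 p, bb_rec0 q]
  have e1 : ∀ h ∈ range H, bb (p+1) (h+1) * bb q (h+1)
      = bb p h * bb q (h+1) + bb p (h+2) * bb q (h+1) := by
    intro h _; rw [bb_rec]; ring
  have e2 : ∀ h ∈ range H, bb p (h+1) * bb (q+1) (h+1)
      = bb p (h+1) * bb q h + bb p (h+1) * bb q (h+2) := by
    intro h _; rw [bb_rec]; ring
  rw [Finset.sum_congr rfl e1, Finset.sum_congr rfl e2,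
    Finset.sum_add_distrib, Finset.sum_add_distrib]
  -- A2 = C - bb p 1 * bb q 0
  have hA2 : (∑ h ∈ range H, bb p (h+2) * bb q (h+1))
      = (∑ h ∈ range H, bb p (h+1) * bb q h) - bb p 1 * bb q 0 := by
    have h1 := Finset.sum_range_succ' (fun h => bb p (h+1) * bb q h) H
    have h2 := Finset.sum_range_succ (fun h => bb p (h+1) * bb q h) H
    rw [h2] at h1
    rw [bb_eq_zero_of_gt (by omega : p < H+1)] at h1
    simp only [zero_mul, add_zero] at h1
    have e3 : ∀ h ∈ range H, bb p (h+1+1) * bb q (h+1) = bb p (h+2) * bb q (h+1) := by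
      intro h _; rw [show h+1+1 = h+2 by ring]
    rw [Finset.sum_congr rfl e3] at h1
    linarith [h1]
  -- B2 = A1 - bb p 0 * bb q 1
  have hB2 : (∑ h ∈ range H, bb p (h+1) * bb q (h+2))
      = (∑ h ∈ range H, bb p h * bb q (h+1)) - bb p 0 * bb q 1 := by
    have h1 := Finset.sum_range_succ' (fun h => bb p h * bb q (h+1)) H
    have h2 := Finset.sum_range_succ (fun h => bb p h * bb q (h+1)) H
    rw [h2] at h1
    rw [bb_eq_zero_of_gt (by omega : q < H+1)] at h1
    simp only [mul_zero, add_zero] at h1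
    have e3 : ∀ h ∈ range H, bb p (h+1) * bb q (h+1+1) = bb p (h+1) * bb q (h+2) := by
      intro h _; rw [show h+1+1 = h+2 by ring]
    rw [Finset.sum_congr rfl e3] at h1
    linarith [h1]
  rw [hA2, hB2]
  ring

lemma SS_eq (p : ℕ) : ∀ q H, p + q < H → SS H p q = bb (p+q) 0 := by
  induction p with
  | zero =>
    intro q H hH
    unfold SS
    rw [Finset.sum_eq_single 0]
    · rw [bb_zero_zero, show 0 + q = q by omega]; ring
    · intro b _ hb
      obtain ⟨b', rfl⟩ : ∃ b', b = b' + 1 := ⟨b - 1, by omega⟩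
      rw [bb_zero_succ]; ring
    · intro habs
      exfalso; exact habs (Finset.mem_range.mpr (by omega))
  | succ p ih =>
    intro q H hH
    obtain ⟨H', rfl⟩ : ∃ H', H = H' + 1 := ⟨H - 1, by omega⟩
    rw [SS_step H' p q (by omega) (by omega)]
    rw [ih (q+1) (H'+1) (by omega)]
    rw [show p + (q+1) = p + 1 + q by ring]

lemma sum_pair (f : ℕ → ℤ) (K : ℕ) :
    ∑ h ∈ range (2*K), f h = ∑ k ∈ range K, (f (2*k) + f (2*k+1)) := by
  induction K with
  | zero => simp
  | succ K ih =>
    rw [show 2*(K+1) = (2*K+1)+1 by ring, Finset.sum_range_succ, Finset.sum_range_succ,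
      Finset.sum_range_succ, ih]
    ring

lemma lem2 (i j K : ℕ) (hK : i < K) :
    (∑ k ∈ range K, bb (2*i) (2*k) * bb (2*j) (2*k)) = (catalan (i+j) : ℤ) := by
  have shrink : ∀ K', i < K' →
      (∑ k ∈ range K', bb (2*i) (2*k) * bb (2*j) (2*k))
        = ∑ k ∈ range (i+1), bb (2*i) (2*k) * bb (2*j) (2*k) := by
    intro K' hK'
    symm
    apply Finset.sum_subset (Finset.range_subset_range.mpr (by omega))
    intro k _ hk
    rw [Finset.mem_range, not_lt] at hk
    rw [bb_eq_zero_of_gt (by omega)]; ring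
  rw [shrink K hK, ← shrink (i+j+1) (by omega)]
  have key : SS (2*(i+j+1)) (2*i) (2*j) = (catalan (i+j) : ℤ) := by
    rw [SS_eq (2*i) (2*j) (2*(i+j+1)) (by omega), show 2*i+2*j = 2*(i+j) by ring,
      bb_catalan]
  rw [← key]
  unfold SS
  rw [sum_pair]
  apply Finset.sum_congr rfl
  intro k _
  rw [bb_odd (2*j) (2*k+1) (by omega)]
  ring


lemma neg_one_pow_congr {a b : ℕ} (h : a % 2 = b % 2) : ((-1:ℤ))^a = (-1)^b := by
  conv_lhs => rw [← Nat.div_add_mod a 2]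
  conv_rhs => rw [← Nat.div_add_mod b 2]
  rw [pow_add, pow_add, pow_mul, pow_mul]
  norm_num [h]

lemma rot_val_aux (N' : ℕ) (s : ℕ) : ∀ w : Fin (N'+1),
    (((finRotate (N'+1))^s) w).val = (w.val + s) % (N'+1) := by
  induction s with
  | zero =>
    intro w
    simp [Nat.mod_eq_of_lt w.isLt]
  | succ s ih =>
    intro w
    rw [pow_succ, Equiv.Perm.mul_apply, finRotate_succ_apply, ih (w+1)]
    have h1 : (w + 1).val = (w.val + (1 : Fin (N'+1)).val) % (N'+1) := by
      rw [Fin.add_def]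
    rw [h1, Fin.val_one']
    rcases Nat.eq_zero_or_pos N' with hN' | hN'
    · subst hN'; simp [Nat.mod_one]
    · rw [Nat.mod_eq_of_lt (show 1 < N'+1 by omega), Nat.mod_add_mod]
      congr 1
      omega

lemma rot_val {N : ℕ} (hN : 0 < N) (s : ℕ) (w : Fin N) :
    (((finRotate N)^s) w).val = (w.val + s) % N := by
  obtain ⟨N', rfl⟩ : ∃ N', N = N' + 1 := ⟨N - 1, by omega⟩
  exact rot_val_aux N' s w

section Assembly

variable (n r : ℕ)

noncomputable def Lmat : Matrix (Fin (n+r)) (Fin (n+r)) ℤ :=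
  fun i k => bb (2*(i:ℕ)) (2*(k:ℕ))

noncomputable def Mmat : Matrix (Fin (n+r)) (Fin (n+r)) ℤ :=
  fun k j => mm (k:ℕ) (j:ℕ)

noncomputable def Glob : Matrix (Fin (n+r)) (Fin (n+r)) ℤ :=
  fun w z => (catalan ((w:ℕ)+(z:ℕ)) : ℤ)

lemma L_mul_M : Lmat n r * Mmat n r = 1 := by
  ext i j
  rw [Matrix.mul_apply]
  unfold Lmat Mmat
  rw [Fin.sum_univ_eq_sum_range (fun k => bb (2*(i:ℕ)) (2*k) * mm k (j:ℕ)) (n+r)]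
  rw [lem1 (i:ℕ) (j:ℕ) (n+r) i.isLt]
  rw [Matrix.one_apply]
  by_cases h : i = j
  · rw [if_pos h, if_pos (by rw [h])]
  · rw [if_neg h, if_neg (fun hv => h (Fin.ext hv))]

lemma Glob_eq : Glob n r = Lmat n r * (Lmat n r)ᵀ := by
  ext i j
  rw [Matrix.mul_apply]
  unfold Lmat Glob
  change _ = ∑ k : Fin (n+r), bb (2*(i:ℕ)) (2*(k:ℕ)) * bb (2*(j:ℕ)) (2*(k:ℕ))
  rw [Fin.sum_univ_eq_sum_range (fun k => bb (2*(i:ℕ)) (2*k) * bb (2*(j:ℕ)) (2*k)) (n+r)]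
  rw [lem2 (i:ℕ) (j:ℕ) (n+r) i.isLt]

lemma M_mul_L : Mmat n r * Lmat n r = 1 := mul_eq_one_comm.mp (L_mul_M n r)

lemma Glob_inv : Glob n r * ((Mmat n r)ᵀ * Mmat n r) = 1 := by
  rw [Glob_eq]
  have key : (Lmat n r)ᵀ * (Mmat n r)ᵀ = 1 := by
    rw [← Matrix.transpose_mul, M_mul_L, Matrix.transpose_one]
  calc Lmat n r * (Lmat n r)ᵀ * ((Mmat n r)ᵀ * Mmat n r)
      = Lmat n r * (((Lmat n r)ᵀ * (Mmat n r)ᵀ) * Mmat n r) := by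
        simp only [Matrix.mul_assoc]
    _ = Lmat n r * Mmat n r := by rw [key, Matrix.one_mul]
    _ = 1 := L_mul_M n r

lemma det_L : (Lmat n r).det = 1 := by
  rw [Matrix.det_of_lowerTriangular (Lmat n r) (by
    intro i j hij
    have hij' : i < j := hij
    rw [Fin.lt_def] at hij'
    exact bb_eq_zero_of_gt (by omega))]
  have : ∀ i : Fin (n+r), Lmat n r i i = 1 := fun i => bb_diag _
  rw [Finset.prod_congr rfl (fun i _ => this i)]
  simp

lemma det_Glob : (Glob n r).det = 1 := by
  rw [Glob_eq, Matrix.det_mul, Matrix.det_transpose, det_L]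
  try norm_num

-- embeddings
def ra : Fin n → Fin (n+r) := fun i => ⟨r + (i:ℕ), by omega⟩
def rb : Fin r → Fin (n+r) := fun i => ⟨(i:ℕ), by omega⟩
def ca : Fin n → Fin (n+r) := fun j => ⟨(j:ℕ), by omega⟩
def cb : Fin r → Fin (n+r) := fun j => ⟨n + (j:ℕ), by omega⟩

noncomputable def KK : Matrix (Fin (n+r)) (Fin (n+r)) ℤ := (Mmat n r)ᵀ * Mmat n r

noncomputable def Tmat : Matrix (Fin n ⊕ Fin r) (Fin n ⊕ Fin r) ℤ :=
  Matrix.fromBlocks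
    ((Glob n r).submatrix (ra n r) (ca n r)) ((Glob n r).submatrix (ra n r) (cb n r))
    ((Glob n r).submatrix (rb n r) (ca n r)) ((Glob n r).submatrix (rb n r) (cb n r))

noncomputable def Umat : Matrix (Fin n) (Fin r) ℤ := (KK n r).submatrix (ca n r) (rb n r)
noncomputable def Vmat : Matrix (Fin r) (Fin r) ℤ := (KK n r).submatrix (cb n r) (rb n r)
noncomputable def Xmat : Matrix (Fin r) (Fin r) ℤ := fun i t => mm (n + (t:ℕ)) (n + (i:ℕ))
noncomputable def Smat : Matrix (Fin r) (Fin r) ℤ := fun t j => mm (n + (t:ℕ)) ((j:ℕ))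

/-- key summation split -/
lemma split_sum (x z : Fin (n+r)) :
    (∑ y : Fin n, Glob n r x (ca n r y) * KK n r (ca n r y) z)
      + (∑ y : Fin r, Glob n r x (cb n r y) * KK n r (cb n r y) z)
      = (Glob n r * KK n r) x z := by
  rw [Matrix.mul_apply]
  rw [Fin.sum_univ_add (fun w => Glob n r x w * KK n r w z)]
  congr 1

lemma GlobKK : Glob n r * KK n r = 1 := by
  unfold KK; exact Glob_inv n r

lemma prodEq : Tmat n r * Matrix.fromBlocks 1 (Umat n r) 0 (Vmat n r)
    = Matrix.fromBlocks ((Glob n r).submatrix (ra n r) (ca n r)) 0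
        ((Glob n r).submatrix (rb n r) (ca n r)) 1 := by
  unfold Tmat
  rw [Matrix.fromBlocks_multiply]
  have h11 : (Glob n r).submatrix (ra n r) (ca n r) * (1 : Matrix (Fin n) (Fin n) ℤ)
      + (Glob n r).submatrix (ra n r) (cb n r) * (0 : Matrix (Fin r) (Fin n) ℤ)
      = (Glob n r).submatrix (ra n r) (ca n r) := by
    rw [Matrix.mul_one, Matrix.mul_zero, add_zero]
  have h21 : (Glob n r).submatrix (rb n r) (ca n r) * (1 : Matrix (Fin n) (Fin n) ℤ)
      + (Glob n r).submatrix (rb n r) (cb n r) * (0 : Matrix (Fin r) (Fin n) ℤ)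
      = (Glob n r).submatrix (rb n r) (ca n r) := by
    rw [Matrix.mul_one, Matrix.mul_zero, add_zero]
  have h12 : (Glob n r).submatrix (ra n r) (ca n r) * Umat n r
      + (Glob n r).submatrix (ra n r) (cb n r) * Vmat n r = 0 := by
    ext i j
    have h := split_sum n r (ra n r i) (rb n r j)
    rw [GlobKK] at h
    simp only [Matrix.add_apply, Matrix.mul_apply, Matrix.submatrix_apply, Matrix.zero_apply,
      Umat, Vmat]
    rw [h, Matrix.one_apply, if_neg]
    intro hv
    have hval := congrArg Fin.val hv
    simp only [ra, rb] at hval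
    omega
  have h22 : (Glob n r).submatrix (rb n r) (ca n r) * Umat n r
      + (Glob n r).submatrix (rb n r) (cb n r) * Vmat n r = 1 := by
    ext i j
    have h := split_sum n r (rb n r i) (rb n r j)
    rw [GlobKK] at h
    simp only [Matrix.add_apply, Matrix.mul_apply, Matrix.submatrix_apply, Umat, Vmat]
    rw [h, Matrix.one_apply, Matrix.one_apply]
    by_cases hij : i = j
    · rw [if_pos (by rw [hij]), if_pos hij]
    · rw [if_neg hij, if_neg]
      intro hv
      have hval := congrArg Fin.val hv
      simp only [rb] at hval
      exact hij (Fin.ext hval)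
  rw [h11, h21, h12, h22]

lemma Veq : Vmat n r = Xmat n r * Smat n r := by
  ext i j
  unfold Vmat
  rw [Matrix.submatrix_apply, Matrix.mul_apply]
  unfold KK
  rw [Matrix.mul_apply]
  simp only [Matrix.transpose_apply]
  rw [Fin.sum_univ_add (fun k => Mmat n r k (cb n r i) * Mmat n r k (rb n r j))]
  have hz : (∑ k : Fin n, Mmat n r (Fin.castAdd r k) (cb n r i)
      * Mmat n r (Fin.castAdd r k) (rb n r j)) = 0 := by
    apply Finset.sum_eq_zero
    intro k _
    have : Mmat n r (Fin.castAdd r k) (cb n r i) = 0 := by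
      unfold Mmat
      apply mm_eq_zero_of_lt
      simp only [Fin.coe_castAdd, cb]
      omega
    rw [this]; ring
  rw [hz, zero_add]
  apply Finset.sum_congr rfl
  intro t _
  unfold Mmat Xmat Smat
  simp only [Fin.coe_natAdd, cb, rb]

lemma det_X : (Xmat n r).det = 1 := by
  rw [Matrix.det_of_upperTriangular (by
    intro i j hij
    have hij' : (j:ℕ) < (i:ℕ) := hij
    exact mm_eq_zero_of_lt (by omega))]
  have : ∀ i : Fin r, Xmat n r i i = 1 := fun i => mm_diag _
  rw [Finset.prod_congr rfl (fun i _ => this i)]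
  simp

noncomputable def Rmat : Matrix (Fin r) (Fin r) ℤ :=
  Matrix.of (fun i j : Fin r => (binom ((i : ℕ) + j + n) ((i : ℤ) - (j : ℤ) + n) : ℤ))

lemma Seq : Smat n r = (Matrix.diagonal fun t : Fin r => ((-1:ℤ))^(n+(t:ℕ)))
    * (Rmat n r * (Matrix.diagonal fun j : Fin r => ((-1:ℤ))^((j:ℕ)))) := by
  ext t j
  rw [Matrix.diagonal_mul, Matrix.mul_diagonal]
  unfold Smat Rmat
  rw [mm_def, Matrix.of_apply]
  rw [show (t:ℕ)+(j:ℕ)+n = n+(t:ℕ)+(j:ℕ) from by ring]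
  rw [show (t:ℤ)-(j:ℤ)+(n:ℤ) = ((n+(t:ℕ) : ℕ):ℤ) - ((j:ℕ):ℤ) from by push_cast; ring]
  ring

lemma det_S : (Smat n r).det = (-1:ℤ)^(n*r) * (Rmat n r).det := by
  rw [Seq, Matrix.det_mul, Matrix.det_mul, Matrix.det_diagonal, Matrix.det_diagonal]
  have p1 : (∏ t : Fin r, ((-1:ℤ))^(n+(t:ℕ))) * (∏ j : Fin r, ((-1:ℤ))^((j:ℕ)))
      = (-1:ℤ)^(n*r) := by
    rw [← Finset.prod_mul_distrib]
    have he : ∀ t : Fin r, ((-1:ℤ))^(n+(t:ℕ)) * ((-1:ℤ))^((t:ℕ)) = (-1:ℤ)^n := by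
      intro t
      rw [← pow_add]
      exact neg_one_pow_congr (by omega)
    rw [Finset.prod_congr rfl (fun t _ => he t), Finset.prod_const, ← pow_mul]
    congr 1
    simp [Finset.card_univ]
  calc (∏ t : Fin r, ((-1:ℤ))^(n+(t:ℕ))) * ((Rmat n r).det * ∏ j : Fin r, ((-1:ℤ))^((j:ℕ)))
      = ((∏ t : Fin r, ((-1:ℤ))^(n+(t:ℕ))) * (∏ j : Fin r, ((-1:ℤ))^((j:ℕ))))
        * (Rmat n r).det := by ring
    _ = (-1:ℤ)^(n*r) * (Rmat n r).det := by rw [p1]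

lemma det_T (hN : 0 < n + r) : (Tmat n r).det = (-1:ℤ)^(n*r) := by
  have e := (finSumFinEquiv : Fin n ⊕ Fin r ≃ Fin (n+r))
  set ρ : Equiv.Perm (Fin (n+r)) := (finRotate (n+r))^r with hρdef
  set τ : Equiv.Perm (Fin n ⊕ Fin r) :=
    (finSumFinEquiv : Fin n ⊕ Fin r ≃ Fin (n+r)).symm.permCongr ρ with hτdef
  have hτ : ∀ x, (finSumFinEquiv : Fin n ⊕ Fin r ≃ Fin (n+r)) (τ x)
      = ρ ((finSumFinEquiv : Fin n ⊕ Fin r ≃ Fin (n+r)) x) := by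
    intro x
    rw [hτdef, Equiv.permCongr_apply]
    simp
  have hρ1 : ∀ i : Fin n, ρ ((finSumFinEquiv : Fin n ⊕ Fin r ≃ Fin (n+r)) (Sum.inl i))
      = ra n r i := by
    intro i
    apply Fin.ext
    rw [finSumFinEquiv_apply_left, hρdef, rot_val hN r]
    simp only [Fin.coe_castAdd, ra]
    have := i.isLt
    rw [Nat.mod_eq_of_lt (by omega)]
    omega
  have hρ2 : ∀ j : Fin r, ρ ((finSumFinEquiv : Fin n ⊕ Fin r ≃ Fin (n+r)) (Sum.inr j))
      = rb n r j := by
    intro j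
    apply Fin.ext
    rw [finSumFinEquiv_apply_right, hρdef, rot_val hN r]
    simp only [Fin.coe_natAdd, rb]
    have := j.isLt
    rw [show n + (j:ℕ) + r = (n+r) + (j:ℕ) from by ring, Nat.add_mod_left,
      Nat.mod_eq_of_lt (by omega)]
  have he1 : ∀ j : Fin n, (finSumFinEquiv : Fin n ⊕ Fin r ≃ Fin (n+r)) (Sum.inl j)
      = ca n r j := by
    intro j; apply Fin.ext; rw [finSumFinEquiv_apply_left]; simp [ca]
  have he2 : ∀ j : Fin r, (finSumFinEquiv : Fin n ⊕ Fin r ≃ Fin (n+r)) (Sum.inr j)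
      = cb n r j := by
    intro j; apply Fin.ext; rw [finSumFinEquiv_apply_right]; simp [cb]
  have hTeq : Tmat n r
      = ((Glob n r).submatrix (finSumFinEquiv : Fin n ⊕ Fin r ≃ Fin (n+r))
          (finSumFinEquiv : Fin n ⊕ Fin r ≃ Fin (n+r))).submatrix τ id := by
    ext x y
    simp only [Matrix.submatrix_apply, id_eq]
    rw [hτ x]
    rcases x with i | i <;> rcases y with j | j <;>
      simp only [Tmat, Matrix.fromBlocks_apply₁₁, Matrix.fromBlocks_apply₁₂,
        Matrix.fromBlocks_apply₂₁, Matrix.fromBlocks_apply₂₂, Matrix.submatrix_apply]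
    · rw [hρ1, he1]
    · rw [hρ1, he2]
    · rw [hρ2, he1]
    · rw [hρ2, he2]
  rw [hTeq, Matrix.det_permute, Matrix.det_submatrix_equiv_self, det_Glob, mul_one]
  have hsign : Equiv.Perm.sign τ = Equiv.Perm.sign ρ := Equiv.Perm.sign_permCongr _ _
  rw [hsign, hρdef, map_pow]
  obtain ⟨N', hN'⟩ : ∃ N', n + r = N' + 1 := ⟨n + r - 1, by omega⟩
  rw [hN', sign_finRotate]
  rw [← pow_mul]
  have : (((-1 : ℤˣ) ^ (N' * r) : ℤˣ) : ℤ) = ((-1:ℤ)) ^ (N' * r) := by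
    simp
  rw [Nat.add_sub_cancel, this]
  have h4 : (n+r)*r = (N'+1)*r := by rw [hN']
  rw [Nat.add_mul, Nat.add_mul, one_mul] at h4
  have hrr : ((-1:ℤ))^(r*r) = (-1:ℤ)^r := by
    rcases Nat.even_or_odd r with he | ho
    · rw [(he.mul_right r).neg_one_pow, he.neg_one_pow]
    · rw [(ho.mul ho).neg_one_pow, ho.neg_one_pow]
  have hcan : ((-1:ℤ))^(N'*r) * (-1:ℤ)^r = (-1:ℤ)^(n*r) * (-1:ℤ)^r := by
    rw [← pow_add, ← h4, pow_add, hrr]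
  exact mul_right_cancel₀ (pow_ne_zero _ (by norm_num)) hcan

end Assembly

theorem main_identity (n r : ℕ) :
    Matrix.det (Matrix.of (fun i j : Fin n => (catalan ((i : ℕ) + j + r) : ℤ))) =
      Matrix.det (Matrix.of (fun i j : Fin r =>
        (binom ((i : ℕ) + j + n) ((i : ℤ) - (j : ℤ) + n) : ℤ))) := by
  rcases Nat.eq_zero_or_pos (n + r) with h0 | hN
  · have hn : n = 0 := by omega
    have hr : r = 0 := by omega
    subst hn; subst hr
    rw [Matrix.det_fin_zero, Matrix.det_fin_zero]
  · have hdet := congrArg Matrix.det (prodEq n r)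
    rw [Matrix.det_mul, Matrix.det_fromBlocks_zero₂₁, Matrix.det_fromBlocks_zero₁₂,
      Matrix.det_one, Matrix.det_one, one_mul, mul_one] at hdet
    have hV : (Vmat n r).det = (-1:ℤ)^(n*r) * (Rmat n r).det := by
      rw [Veq, Matrix.det_mul, det_X, one_mul, det_S]
    have hA : Matrix.of (fun i j : Fin n => (catalan ((i : ℕ) + j + r) : ℤ))
        = (Glob n r).submatrix (ra n r) (ca n r) := by
      ext i j
      simp only [Matrix.of_apply, Matrix.submatrix_apply, Glob, ra, ca]
      congr 2
      omega
    have hR : Matrix.of (fun i j : Fin r =>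
        (binom ((i : ℕ) + j + n) ((i : ℤ) - (j : ℤ) + n) : ℤ)) = Rmat n r := rfl
    rw [hA, hR, ← hdet, det_T n r hN, hV, ← mul_assoc, ← pow_add,
      show n*r + n*r = 2*(n*r) from by ring, pow_mul]
    norm_num

end HCB

theorem hankel_catalan_eq_binom_det (n r : ℕ) :
    Matrix.det (Matrix.of (fun i j : Fin n => (catalan ((i : ℕ) + j + r) : ℤ))) =
      Matrix.det (Matrix.of (fun i j : Fin r =>
        (binom ((i : ℕ) + j + n) ((i : ℤ) - (j : ℤ) + n) : ℤ))) :=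
  HCB.main_identity n r
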